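/- Let k ≥ 1 and let λ = (λ₁,…,λ_k) ∈ ℂ^k satisfy λ_i ≠ λ₁ for 2 ≤ i ≤ k. Then for all sufficiently negative real R the quantities D₁₁^{edge,k}(R+λ₁,…,R+λ_k) and D₁₁^{edge,1}(R+λ₁) are defined with D₁₁^{edge,1}(R+λ₁) ≠ 0, and lim_{R→−∞, R∈ℝ} D₁₁^{edge,k}(R+λ₁,…,R+λ_k) / D₁₁^{edge,1}(R+λ₁) = D₁₁^{bulk,k}(λ₁,…,λ_k) / D₁₁^{bulk,1}(λ₁) = π · D₁₁^{bulk,k}(λ₁,…,λ_k). -/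

import Mathlib

open ComplexConjugate Filter MeasureTheory Topology

noncomputable section

/-- Exponential polynomial `e_p(x) = ∑_{k=0}^p x^k/k!`. -/
def epol (p : ℕ) (x : ℂ) : ℂ := ∑ k ∈ Finset.range (p + 1), x ^ k / (Nat.factorial k : ℂ)

/-- `f_p(x) = (p+1)·e_p(x) - x·e_{p-1}(x)`, with `e_{-1} ≡ 0`. -/
def fpol (p : ℕ) (x : ℂ) : ℂ :=
  ((p : ℂ) + 1) * epol p x - x * (if p = 0 then 0 else epol (p - 1) x)

/-- The polynomial `𝔉_n(x,y,z)`. -/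
def Fgoth (n : ℕ) (x y z : ℂ) : ℂ :=
  epol n (x * y) * epol n (x * z) - epol n (x * y * z) * epol n x * (1 - x * (1 - y) * (1 - z))
    + ((1 - y) * (1 - z) / (Nat.factorial n : ℂ)) *
      (((x * y * z) ^ (n + 1) * epol n x - x ^ (n + 1) * epol n (x * y * z)) / (1 - y * z))

/-- The weight `ω(x,y|λ,μ) = (1/π)(1+(x-λ)(y-μ))e^{-xy}`. -/
def omegaW (x y l m : ℂ) : ℂ :=
  (1 / (Real.pi : ℂ)) * (1 + (x - l) * (y - m)) * Complex.exp (-(x * y))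

/-- The finite-`N` reduced kernel `κ^{(N)}(x̄,y|λ,λ̄)`. -/
def kapN (N : ℕ) (xb y l lb : ℂ) : ℂ :=
  (((N : ℂ) + 1) * Fgoth (N + 1) (l * lb) (xb / lb) (y / l)
      - l * lb * Fgoth N (l * lb) (xb / lb) (y / l)) /
    ((xb - lb) ^ 2 * (y - l) ^ 2 * fpol N (l * lb))

/-- The finite-`N` kernel `K₁₁^{(N)}(x,x̄,y,ȳ|λ,λ̄)`. -/
def K11N (N : ℕ) (x xb y yb l lb : ℂ) : ℂ := omegaW x xb l lb * kapN N xb y l lb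

/-- The finite-`N` kernel `K₁₂^{(N)}(x,x̄,y,ȳ|u,ū,v,v̄)`. -/
def K12N (N : ℕ) (x xb y yb u ub v vb : ℂ) : ℂ :=
  omegaW x xb u vb / kapN N ub v u vb *
    (kapN N ub v u vb * kapN N xb y u vb - kapN N ub y u vb * kapN N xb v u vb)

/-- `Z_N = π^N ∏_{j=1}^N j!`. -/
def Zconst (N : ℕ) : ℂ := (Real.pi : ℂ) ^ N * ∏ j ∈ Finset.Icc 1 N, (Nat.factorial j : ℂ)

/-- Vandermonde product `∏_{0 ≤ j < i < n} (v i - v j)`. -/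
def vdm (n : ℕ) (v : ℕ → ℂ) : ℂ := ∏ i ∈ Finset.range n, ∏ j ∈ Finset.range i, (v i - v j)

/-- Pads the `k` conditioned eigenvalues `lam` with the `N-k` integration variables `w`. -/
def pad (N k : ℕ) (lam : Fin k → ℂ) (w : Fin (N - k) → ℂ) (m : ℕ) : ℂ :=
  if h : m < k then lam ⟨m, h⟩ else if h2 : m - k < N - k then w ⟨m - k, h2⟩ else 0

/-- Conditional diagonal overlap `D₁₁^{(N,k)}`. -/
def D11 (N k : ℕ) (lam : Fin k → ℂ) : ℂ :=
  (Nat.factorial N : ℂ) / (Nat.factorial (N - k) : ℂ) / Zconst N *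
    Complex.exp (-(pad N k lam (fun _ => 0) 0 * conj (pad N k lam (fun _ => 0) 0))) *
    ∫ w : Fin (N - k) → ℂ,
      vdm (N - 1) (fun m => pad N k lam w (m + 1)) *
        conj (vdm (N - 1) (fun m => pad N k lam w (m + 1))) *
        ∏ m ∈ Finset.Icc 1 (N - 1),
          ((1 + (pad N k lam w m - pad N k lam w 0) *
                (conj (pad N k lam w m) - conj (pad N k lam w 0))) *
            Complex.exp (-(pad N k lam w m * conj (pad N k lam w m))))

/-- Conditional off-diagonal overlap `D₁₂^{(N,k)}`. -/
def D12 (N k : ℕ) (lam : Fin k → ℂ) : ℂ :=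
  -((Nat.factorial N : ℂ) / (Nat.factorial (N - k) : ℂ) / Zconst N *
    Complex.exp (-(pad N k lam (fun _ => 0) 0 * conj (pad N k lam (fun _ => 0) 0)
        + pad N k lam (fun _ => 0) 1 * conj (pad N k lam (fun _ => 0) 1))) *
    ∫ w : Fin (N - k) → ℂ,
      vdm (N - 1) (fun m => pad N k lam w (m + 1)) *
        vdm (N - 1) (fun m => conj (pad N k lam w (if m = 0 then 0 else m + 1))) *
        ∏ m ∈ Finset.Icc 2 (N - 1),
          ((1 + (pad N k lam w m - pad N k lam w 0) *
                (conj (pad N k lam w m) - conj (pad N k lam w 1))) *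
            Complex.exp (-(pad N k lam w m * conj (pad N k lam w m)))))

/-- `D̃₁₁^{(N,k)}` with the conjugated variables treated as independent. -/
def D11t (N k : ℕ) (lam mu : Fin k → ℂ) : ℂ :=
  (Nat.factorial N : ℂ) / (Nat.factorial (N - k) : ℂ) / Zconst N *
    Complex.exp (-(pad N k lam (fun _ => 0) 0 * pad N k mu (fun _ => 0) 0)) *
    ∫ w : Fin (N - k) → ℂ,
      vdm (N - 1) (fun m => pad N k lam w (m + 1)) *
        vdm (N - 1) (fun m => pad N k mu (fun i => conj (w i)) (m + 1)) *
        ∏ m ∈ Finset.Icc 1 (N - 1),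
          ((1 + (pad N k lam w m - pad N k lam w 0) *
                (pad N k mu (fun i => conj (w i)) m - pad N k mu (fun i => conj (w i)) 0)) *
            Complex.exp (-(pad N k lam w m * pad N k mu (fun i => conj (w i)) m)))

/-- `D̃₁₂^{(N,k)}` with the conjugated variables treated as independent. -/
def D12t (N k : ℕ) (lam mu : Fin k → ℂ) : ℂ :=
  -((Nat.factorial N : ℂ) / (Nat.factorial (N - k) : ℂ) / Zconst N *
    Complex.exp (-(pad N k lam (fun _ => 0) 0 * pad N k mu (fun _ => 0) 0
        + pad N k lam (fun _ => 0) 1 * pad N k mu (fun _ => 0) 1)) *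
    ∫ w : Fin (N - k) → ℂ,
      vdm (N - 1) (fun m => pad N k lam w (m + 1)) *
        vdm (N - 1) (fun m => pad N k mu (fun i => conj (w i)) (if m = 0 then 0 else m + 1)) *
        ∏ m ∈ Finset.Icc 2 (N - 1),
          ((1 + (pad N k lam w m - pad N k lam w 0) *
                (pad N k mu (fun i => conj (w i)) m - pad N k mu (fun i => conj (w i)) 1)) *
            Complex.exp (-(pad N k lam w m * pad N k mu (fun i => conj (w i)) m))))

/-- Bulk weight `ω^{bulk}`. -/
def omegaBulk (u ub l lb : ℂ) : ℂ :=
  (1 / (Real.pi : ℂ)) * (1 + (u - l) * (ub - lb)) * Complex.exp (-((u - l) * (ub - lb)))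

/-- Bulk reduced kernel `κ^{bulk}(ū,v|λ,λ̄) = (1+(w-1)e^w)/w²`, `w = (ū-λ̄)(v-λ)`. -/
def kapBulk (ub v l lb : ℂ) : ℂ :=
  (1 + ((ub - lb) * (v - l) - 1) * Complex.exp ((ub - lb) * (v - l))) /
    ((ub - lb) * (v - l)) ^ 2

def K11bulk (u ub v vb l lb : ℂ) : ℂ := omegaBulk u ub l lb * kapBulk ub v l lb

def K12bulk (x xb y yb u ub v vb : ℂ) : ℂ :=
  omegaBulk x xb u vb / kapBulk ub v u vb *
    (kapBulk ub v u vb * kapBulk xb y u vb - kapBulk ub y u vb * kapBulk xb v u vb)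

/-- `F(a) = (2π)^{-1/2} ∫₀^∞ e^{-(a+t)²/2} dt`, entire continuation of `(1/2)erfc(a/√2)`. -/
def Ferf (a : ℂ) : ℂ :=
  (1 / (Real.sqrt (2 * Real.pi) : ℂ)) *
    ∫ t in Set.Ioi (0 : ℝ), Complex.exp (-((a + (t : ℂ)) ^ 2) / 2)

/-- The function `H(a,b,c,d,f)` from the edge scaling limit. -/
def Hedge (a b c d f : ℂ) : ℂ :=
  -(Real.sqrt (2 * Real.pi) : ℂ) /
      (1 - (Real.sqrt (2 * Real.pi) : ℂ) * a * Complex.exp (a ^ 2 / 2) * Ferf a) *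
    deriv (fun x : ℂ =>
      Complex.exp ((a + x) ^ 2 / 2) *
        (Complex.exp (-f) * Ferf (b + x) * Ferf (c + x) - Ferf (d + x) * Ferf (a + x) +
          f * Ferf d * Ferf (a + x))) 0

def omegaEdge (x xb l lb : ℂ) : ℂ :=
  (1 / (Real.pi : ℂ)) * (1 + (x - l) * (xb - lb)) * Complex.exp (-(x * xb))

def kapEdge (xb y l lb : ℂ) : ℂ :=
  Complex.exp (xb * y) * Hedge (l + lb) (l + xb) (y + lb) (y + xb) ((l - y) * (lb - xb)) /
    ((l - y) ^ 2 * (lb - xb) ^ 2)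

def K11edge (x xb y yb l lb : ℂ) : ℂ := omegaEdge x xb l lb * kapEdge xb y l lb

def K12edge (x xb y yb u ub v vb : ℂ) : ℂ :=
  omegaEdge x xb u vb / kapEdge ub v u vb *
    (kapEdge ub v u vb * kapEdge xb y u vb - kapEdge ub y u vb * kapEdge xb v u vb)

/-- Index embedding `Fin (k-1) → Fin k`, `i ↦ i+1`. -/
def sh1 {k : ℕ} (i : Fin (k - 1)) : Fin k := ⟨i.val + 1, by have := i.isLt; omega⟩

/-- Index embedding `Fin (k-2) → Fin k`, `i ↦ i+2`. -/
def sh2 {k : ℕ} (i : Fin (k - 2)) : Fin k := ⟨i.val + 2, by have := i.isLt; omega⟩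

def ev0 {k : ℕ} (lam : Fin k → ℂ) : ℂ := if h : 0 < k then lam ⟨0, h⟩ else 0

def ev1 {k : ℕ} (lam : Fin k → ℂ) : ℂ := if h : 1 < k then lam ⟨1, h⟩ else 0

/-- The edge overlap function `D₁₁^{edge,k}`. -/
def D11edgeF (k : ℕ) (lam : Fin k → ℂ) : ℂ :=
  (1 / (Real.sqrt (2 * Real.pi ^ 3) : ℂ)) *
    (Complex.exp (-((ev0 lam + conj (ev0 lam)) ^ 2 / 2)) -
      (Real.sqrt (2 * Real.pi) : ℂ) * (ev0 lam + conj (ev0 lam)) *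
        Ferf (ev0 lam + conj (ev0 lam))) *
    Matrix.det (Matrix.of fun i j : Fin (k - 1) =>
      K11edge (lam (sh1 i)) (conj (lam (sh1 i))) (lam (sh1 j)) (conj (lam (sh1 j)))
        (ev0 lam) (conj (ev0 lam)))

/-- The bulk overlap function `D₁₁^{bulk,k}`. -/
def D11bulkF (k : ℕ) (lam : Fin k → ℂ) : ℂ :=
  (1 / (Real.pi : ℂ)) *
    Matrix.det (Matrix.of fun i j : Fin (k - 1) =>
      K11bulk (lam (sh1 i)) (conj (lam (sh1 i))) (lam (sh1 j)) (conj (lam (sh1 j)))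
        (ev0 lam) (conj (ev0 lam)))

/-- The bulk off-diagonal overlap function `D₁₂^{bulk,k}`. -/
def D12bulkF (k : ℕ) (lam : Fin k → ℂ) : ℂ :=
  -(1 / (Real.pi : ℂ) ^ 2) * kapBulk (conj (ev0 lam)) (ev1 lam) (ev0 lam) (conj (ev1 lam)) *
    Matrix.det (Matrix.of fun i j : Fin (k - 2) =>
      K12bulk (lam (sh2 i)) (conj (lam (sh2 i))) (lam (sh2 j)) (conj (lam (sh2 j)))
        (ev0 lam) (conj (ev0 lam)) (ev1 lam) (conj (ev1 lam)))

/-- The first-order differential operator `𝔇_m = 1 - (λ_m-λ₁)(μ_m-μ₁) - (λ_m-λ₁)∂/∂λ_m`. -/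
def Dop {k : ℕ} (m : Fin k) (g : (Fin k → ℂ) → (Fin k → ℂ) → ℂ)
    (lam mu : Fin k → ℂ) : ℂ :=
  (1 - (lam m - lam ⟨0, m.pos⟩) * (mu m - mu ⟨0, m.pos⟩)) * g lam mu -
    (lam m - lam ⟨0, m.pos⟩) * deriv (fun t => g (Function.update lam m t) mu) (lam m)

/-- Holomorphic extension `ρ̃` of the bulk `k`-point Ginibre correlation function. -/
def rhoT (k : ℕ) (lam mu : Fin k → ℂ) : ℂ :=
  ((Real.pi : ℂ) ^ k)⁻¹ * Complex.exp (-(∑ m, lam m * mu m)) *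
    Matrix.det (Matrix.of fun i j : Fin k => Complex.exp (mu i * lam j))

/-- Holomorphic extension `D̃₁₁^{bulk,k}` of the bulk conditional diagonal overlap. -/
def D11tBulk (k : ℕ) (lam mu : Fin k → ℂ) : ℂ :=
  ((Real.pi : ℂ) ^ k)⁻¹ *
    (∏ i : Fin (k - 1),
      (1 + (lam (sh1 i) - ev0 lam) * (mu (sh1 i) - ev0 mu)) /
          ((lam (sh1 i) - ev0 lam) ^ 2 * (mu (sh1 i) - ev0 mu) ^ 2) *
        Complex.exp (-((lam (sh1 i) - ev0 lam) * (mu (sh1 i) - ev0 mu)))) *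
    Matrix.det (Matrix.of fun m n : Fin (k - 1) =>
      1 - (1 - (mu (sh1 m) - ev0 mu) * (lam (sh1 n) - ev0 lam)) *
        Complex.exp ((mu (sh1 m) - ev0 mu) * (lam (sh1 n) - ev0 lam)))

/-- Monic bi-orthogonal polynomials `P_k(z)` for the weight `ω(·,·|λ,λ̄)`. -/
def Ppoly (l : ℂ) (k : ℕ) (z : ℂ) : ℂ :=
  ∑ m ∈ Finset.range (k + 1), l ^ (k - m) * (fpol m (l * conj l) / fpol k (l * conj l)) * z ^ m

/-- The reduced kernel `G^{(N)}(x,y,z)` as a double sum. -/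
def Gker (N : ℕ) (x y z : ℂ) : ℂ :=
  ∑ m ∈ Finset.range (N + 1), ∑ n ∈ Finset.range (N + 1),
    fpol m x * fpol n x * y ^ m * z ^ n *
      ∑ k ∈ Finset.Icc (max m n) N,
        x ^ k / ((Nat.factorial (k + 1) : ℂ) * fpol k x * fpol (k + 1) x)

end


set_option maxHeartbeats 1000000

noncomputable section AuxProofS7
open Set

def sq2pi : ℂ := (Real.sqrt (2*Real.pi) : ℂ)

lemma sq2pi_ne : sq2pi ≠ 0 := by
  simp only [sq2pi, ne_eq, Complex.ofReal_eq_zero]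
  positivity

lemma norm_cexp' (w : ℂ) : ‖Complex.exp w‖ = Real.exp w.re := Complex.norm_exp w

lemma re_gauss (z : ℂ) : (-(z^2)/2).re = (z.im^2 - z.re^2)/2 := by
  rw [show -(z^2)/2 = ((-(1:ℝ)/2 : ℝ):ℂ) * z^2 by push_cast; ring, Complex.re_ofReal_mul]
  simp [pow_two, Complex.mul_re]
  ring

lemma tendsto_sq_shift (c : ℝ) : Tendsto (fun s : ℝ => (s + c)^2) atBot atTop := by
  have h1 : Tendsto (fun s : ℝ => |s + c|) atBot atTop :=
    tendsto_abs_atBot_atTop.comp (tendsto_atBot_add_const_right _ c tendsto_id)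
  have h2 := (tendsto_pow_atTop (n := 2) two_ne_zero).comp h1
  refine h2.congr fun s => ?_
  simp [Function.comp, sq_abs]

lemma tendsto_gauss_re (Z : ℂ) :
    Tendsto (fun s : ℝ => (Z.im^2 - (s + Z.re)^2)/2) atBot atBot := by
  apply Tendsto.atBot_div_const (by norm_num : (0:ℝ) < 2)
  apply tendsto_atBot_add_const_left
  exact (tendsto_neg_atTop_atBot).comp (tendsto_sq_shift Z.re)

lemma tendsto_gauss (Z : ℂ) :
    Tendsto (fun s : ℝ => Complex.exp (-(((s:ℂ)+Z)^2)/2)) atBot (𝓝 0) := by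
  rw [tendsto_zero_iff_norm_tendsto_zero]
  have he : ∀ s : ℝ, ‖Complex.exp (-(((s:ℂ)+Z)^2)/2)‖
      = Real.exp ((Z.im^2 - (s + Z.re)^2)/2) := by
    intro s
    rw [norm_cexp', re_gauss]
    simp
  simp only [he]
  exact Real.tendsto_exp_atBot.comp (tendsto_gauss_re Z)

lemma integrable_gauss_line (z : ℂ) :
    Integrable (fun t : ℝ => Complex.exp (-((z+t)^2)/2)) :=
  (integrable_cexp_quadratic' (b := -(1/2)) (by norm_num) (-z) (-(z^2)/2)).congr
    (Filter.Eventually.of_forall fun t => by ring_nf)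

lemma integral_gauss_line (z : ℂ) :
    ∫ t : ℝ, Complex.exp (-((z+t)^2)/2) = sq2pi := by
  have h := integral_cexp_quadratic (b := -(1/2)) (by norm_num) (-z) (-(z^2)/2)
  have e1 : ∀ t : ℝ, Complex.exp (-(1/2) * t^2 + (-z)*t + (-(z^2)/2))
      = Complex.exp (-((z+t)^2)/2) := fun t => by ring_nf
  rw [MeasureTheory.integral_congr_ae (Filter.Eventually.of_forall e1)] at h
  rw [h, show -z^2/2 - (-z)^2/(4 * -(1/2 : ℂ)) = 0 by ring, Complex.exp_zero, mul_one,
    show ((Real.pi : ℂ) / -(-(1/2))) = ((2*Real.pi : ℝ) : ℂ) by push_cast; ring,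
    show (1/2 : ℂ) = ((1/2 : ℝ) : ℂ) by norm_num, ← Complex.ofReal_cpow (by positivity),
    sq2pi, Real.rpow_def_of_pos (by positivity), Real.sqrt_eq_rpow,
    Real.rpow_def_of_pos (by positivity)]

lemma tendsto_inv_shift (Z : ℂ) :
    Tendsto (fun s : ℝ => ((s:ℂ)+Z)⁻¹) atBot (𝓝 0) := by
  rw [tendsto_zero_iff_norm_tendsto_zero]
  have hb : ∀ᶠ s : ℝ in atBot, ‖((s:ℂ)+Z)⁻¹‖ ≤ (-(s + Z.re))⁻¹ := by
    filter_upwards [eventually_le_atBot (-Z.re - 1)] with s hs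
    rw [norm_inv]
    have h1 : -(s + Z.re) ≤ ‖(s:ℂ)+Z‖ := by
      have := Complex.abs_re_le_norm ((s:ℂ)+Z)
      have h2 : ((s:ℂ)+Z).re = s + Z.re := by simp
      rw [h2] at this
      calc -(s + Z.re) ≤ |s + Z.re| := neg_le_abs _
        _ ≤ ‖(s:ℂ)+Z‖ := this
    have hpos : (0:ℝ) < -(s + Z.re) := by linarith
    exact inv_anti₀ hpos h1
  have h0 : ∀ᶠ s : ℝ in atBot, (0:ℝ) ≤ ‖((s:ℂ)+Z)⁻¹‖ :=
    Filter.Eventually.of_forall fun s => norm_nonneg _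
  refine squeeze_zero' h0 hb ?_
  refine tendsto_inv_atTop_zero.comp ?_
  exact tendsto_neg_atBot_atTop.comp (tendsto_atBot_add_const_right _ Z.re tendsto_id)

lemma hasDerivAt_gauss (z : ℂ) (w : ℂ) :
    HasDerivAt (fun x : ℂ => Complex.exp (-((x + w)^2)/2))
      (-(z + w) * Complex.exp (-((z + w)^2)/2)) z := by
  have h1 : HasDerivAt (fun x : ℂ => -((x + w)^2)/2) (-(z + w)) z := by
    have h := (((hasDerivAt_id z).add_const w).pow 2).neg.div_const 2
    refine h.congr_deriv ?_
    simp
    try ring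
  have h2 := h1.cexp
  rwa [mul_comm] at h2

lemma hasDerivAt_gauss' (z : ℂ) (w : ℂ) :
    HasDerivAt (fun x : ℂ => Complex.exp (-((w + x)^2)/2))
      (-(w + z) * Complex.exp (-((w + z)^2)/2)) z := by
  have h1 : HasDerivAt (fun x : ℂ => -((w + x)^2)/2) (-(w + z)) z := by
    have h := (((hasDerivAt_id z).const_add w).pow 2).neg.div_const 2
    refine h.congr_deriv ?_
    simp
    try ring
  have h2 := h1.cexp
  rwa [mul_comm] at h2

lemma tendsto_gauss_atTop (Z : ℂ) :
    Tendsto (fun s : ℝ => Complex.exp (-((Z + (s:ℂ))^2)/2)) atTop (𝓝 0) := by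
  rw [tendsto_zero_iff_norm_tendsto_zero]
  have he : ∀ s : ℝ, ‖Complex.exp (-((Z + (s:ℂ))^2)/2)‖
      = Real.exp ((Z.im^2 - (Z.re + s)^2)/2) := by
    intro s; rw [norm_cexp', re_gauss]; simp
  simp only [he]
  refine Real.tendsto_exp_atBot.comp ?_
  apply Tendsto.atBot_div_const (by norm_num : (0:ℝ) < 2)
  apply tendsto_atBot_add_const_left
  refine (tendsto_neg_atTop_atBot).comp ?_
  have h1 : Tendsto (fun s : ℝ => |Z.re + s|) atTop atTop :=
    tendsto_abs_atTop_atTop.comp (tendsto_atTop_add_const_left _ Z.re tendsto_id)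
  have h2 := (tendsto_pow_atTop (n := 2) two_ne_zero).comp h1
  refine h2.congr fun s => ?_
  simp [Function.comp, sq_abs]

lemma hasDerivAt_Ferf (z : ℂ) :
    HasDerivAt Ferf (-Complex.exp (-(z^2)/2) / sq2pi) z := by
  set μ : Measure ℝ := volume.restrict (Ioi (0:ℝ)) with hμ
  set K : ℝ := ((|z.im|+1)^2 + (|z.re|+1)^2)/2 with hK
  have key := hasDerivAt_integral_of_dominated_loc_of_deriv_le
    (μ := μ) (x₀ := z) (s := Metric.ball z 1)
    (F := fun (x:ℂ) (t:ℝ) => Complex.exp (-((x+t)^2)/2))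
    (F' := fun (x:ℂ) (t:ℝ) => -(x+t) * Complex.exp (-((x+t)^2)/2))
    (bound := fun t : ℝ => (‖z‖+1+|t|) * Real.exp (K - t^2/4))
    (Metric.ball_mem_nhds z one_pos)
    (Filter.Eventually.of_forall fun x => (Continuous.aestronglyMeasurable (by fun_prop)))
    ((integrable_gauss_line z).restrict)
    (Continuous.aestronglyMeasurable (by fun_prop))
    ?_ ?_
    (Filter.Eventually.of_forall fun t => fun x _ => hasDerivAt_gauss x (t:ℂ))
  · obtain ⟨hint, hder⟩ := key
    have hFTC : ∫ t in Ioi (0:ℝ), -(z+t) * Complex.exp (-((z+t)^2)/2)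
        = -Complex.exp (-(z^2)/2) := by
      have := integral_Ioi_of_hasDerivAt_of_tendsto' (a := 0) (m := 0)
        (f := fun t : ℝ => Complex.exp (-((z+t)^2)/2))
        (f' := fun t : ℝ => -(z+t) * Complex.exp (-((z+t)^2)/2))
        (fun t _ => (hasDerivAt_gauss' (t:ℂ) z).comp_ofReal)
        hint ?_
      · simpa using this
      · have := tendsto_gauss_atTop z
        refine this.congr fun s => by ring_nf
    have hder2 : HasDerivAt (fun a : ℂ => ∫ t in Ioi (0:ℝ), Complex.exp (-((a+t)^2)/2))
        (-Complex.exp (-(z^2)/2)) z := by rwa [hFTC] at hder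
    have h2 := hder2.const_mul (1/sq2pi)
    have h3 : Ferf = fun a : ℂ => (1/sq2pi) *
        ∫ t in Ioi (0:ℝ), Complex.exp (-((a+t)^2)/2) := by
      funext a
      unfold Ferf sq2pi
      rfl
    rw [h3]
    refine h2.congr_deriv ?_
    ring
  · refine Filter.Eventually.of_forall fun t => fun x hx => ?_
    have hxz : ‖x - z‖ < 1 := by simpa [Metric.mem_ball, dist_eq_norm] using hx
    have h1 : ‖-(x+(t:ℂ)) * Complex.exp (-((x+t)^2)/2)‖
        = ‖x+(t:ℂ)‖ * Real.exp (((x+(t:ℂ)).im^2 - (x+(t:ℂ)).re^2)/2) := by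
      rw [norm_mul, norm_neg, norm_cexp', re_gauss]
    rw [h1]
    have him : |x.im| ≤ |z.im| + 1 := by
      have h := Complex.abs_im_le_norm (x - z)
      simp only [Complex.sub_im] at h
      have h' : |x.im - z.im| ≤ 1 := le_trans h hxz.le
      have := abs_sub_abs_le_abs_sub x.im z.im
      linarith
    have hre : |x.re| ≤ |z.re| + 1 := by
      have h := Complex.abs_re_le_norm (x - z)
      simp only [Complex.sub_re] at h
      have h' : |x.re - z.re| ≤ 1 := le_trans h hxz.le
      have := abs_sub_abs_le_abs_sub x.re z.re
      linarith
    have hnorm : ‖x+(t:ℂ)‖ ≤ ‖z‖+1+|t| := by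
      calc ‖x+(t:ℂ)‖ ≤ ‖x‖ + ‖(t:ℂ)‖ := norm_add_le _ _
        _ ≤ (‖z‖ + 1) + |t| := by
            have : ‖x‖ ≤ ‖z‖ + 1 := by
              have := norm_sub_norm_le x z; linarith
            rw [Complex.norm_real, Real.norm_eq_abs]; linarith
    have hexp : ((x+(t:ℂ)).im^2 - (x+(t:ℂ)).re^2)/2 ≤ K - t^2/4 := by
      have h1' : (x+(t:ℂ)).im = x.im := by simp
      have h2' : (x+(t:ℂ)).re = x.re + t := by simp
      rw [h1', h2', hK]
      nlinarith [sq_nonneg (x.re + t/2), sq_abs x.im, sq_abs x.re,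
        sq_nonneg (|z.im| + 1), sq_nonneg (|z.re| + 1),
        mul_self_le_mul_self (abs_nonneg x.im) him, mul_self_le_mul_self (abs_nonneg x.re) hre]
    exact mul_le_mul hnorm (Real.exp_le_exp.2 hexp) (Real.exp_pos _).le (by positivity)
  · have i1 : Integrable (fun t : ℝ => Real.exp (-(4⁻¹) * t^2)) :=
      integrable_exp_neg_mul_sq (by norm_num)
    have i2 : Integrable (fun t : ℝ => |t| * Real.exp (-(4⁻¹) * t^2)) := by
      refine (integrable_mul_exp_neg_mul_sq (b := 4⁻¹) (by norm_num)).abs.congr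
        (Filter.Eventually.of_forall fun t => ?_)
      dsimp only
      rw [abs_mul, abs_of_pos (Real.exp_pos _)]
    have i3 : Integrable (fun t : ℝ =>
        Real.exp K * ((‖z‖+1) * Real.exp (-(4⁻¹) * t^2) + |t| * Real.exp (-(4⁻¹) * t^2))) :=
      ((i1.const_mul _).add i2).const_mul _
    refine (i3.congr (Filter.Eventually.of_forall fun t => ?_)).restrict
    rw [show K - t^2/4 = K + (-(4⁻¹)*t^2) by ring, Real.exp_add]
    ring

lemma Ferf_eq_one_sub (z : ℂ) :
    Ferf z = 1 - (1/sq2pi) * ∫ t in Iic (0:ℝ), Complex.exp (-((z+t)^2)/2) := by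
  have hsplit := intervalIntegral.integral_Iic_add_Ioi (b := (0:ℝ))
    ((integrable_gauss_line z).integrableOn)
    ((integrable_gauss_line z).integrableOn)
  rw [integral_gauss_line] at hsplit
  have h3 : Ferf z = (1/sq2pi) * ∫ t in Ioi (0:ℝ), Complex.exp (-((z+t)^2)/2) := by
    unfold Ferf sq2pi; rfl
  rw [h3, show (∫ t in Ioi (0:ℝ), Complex.exp (-((z+t)^2)/2))
    = sq2pi - ∫ t in Iic (0:ℝ), Complex.exp (-((z+t)^2)/2) by linear_combination hsplit]
  rw [mul_sub, one_div, inv_mul_cancel₀ sq2pi_ne, ← one_div]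

lemma tendsto_Ferf (Z : ℂ) :
    Tendsto (fun s : ℝ => Ferf ((s:ℂ)+Z)) atBot (𝓝 1) := by
  have hI : Tendsto (fun s : ℝ =>
      ∫ t in Iic (0:ℝ), Complex.exp (-((((s:ℂ)+Z)+t)^2)/2)) atBot (𝓝 0) := by
    have hDCT := MeasureTheory.tendsto_integral_filter_of_dominated_convergence
      (μ := volume.restrict (Iic (0:ℝ))) (l := atBot)
      (F := fun (s:ℝ) (t:ℝ) => Complex.exp (-((((s:ℂ)+Z)+t)^2)/2)) (f := fun _ => (0:ℂ))
      (bound := fun t => Real.exp (Z.im^2/2) * Real.exp (-(2⁻¹) * t^2))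
      (Filter.Eventually.of_forall fun s => Continuous.aestronglyMeasurable (by fun_prop))
      ?_ ?_ ?_
    · simpa using hDCT
    · filter_upwards [eventually_le_atBot (-Z.re)] with s hs
      refine (ae_restrict_iff' measurableSet_Iic).2 (Filter.Eventually.of_forall fun t ht => ?_)
      have h1 : ‖Complex.exp (-((((s:ℂ)+Z)+t)^2)/2)‖
          = Real.exp ((Z.im^2 - (s + Z.re + t)^2)/2) := by
        rw [norm_cexp', re_gauss]; simp
      rw [h1, show Real.exp (Z.im^2/2) * Real.exp (-(2⁻¹) * t^2)
        = Real.exp (Z.im^2/2 + (-(2⁻¹) * t^2)) from (Real.exp_add _ _).symm]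
      refine Real.exp_le_exp.2 ?_
      have ht' : t ≤ 0 := ht
      have hs' : s + Z.re ≤ 0 := by linarith
      nlinarith [mul_nonneg (neg_nonneg.2 hs') (neg_nonneg.2 (by linarith : s + Z.re + 2*t ≤ 0))]
    · exact (((integrable_exp_neg_mul_sq (by norm_num : (0:ℝ) < 2⁻¹)).const_mul _).restrict)
    · refine Filter.Eventually.of_forall fun t => ?_
      have := tendsto_gauss (Z + (t:ℂ))
      refine this.congr fun s => by ring_nf
  have h1 : Tendsto (fun s : ℝ =>
      1 - (1/sq2pi) * ∫ t in Iic (0:ℝ), Complex.exp (-((((s:ℂ)+Z)+t)^2)/2)) atBot (𝓝 1) := by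
    have := (tendsto_const_nhds (x := (1:ℂ)) (f := atBot)).sub
      ((tendsto_const_nhds (x := 1/sq2pi) (f := atBot)).mul hI)
    simpa using this
  refine h1.congr fun s => ?_
  rw [Ferf_eq_one_sub]

lemma hedge_closed (a b c d f : ℂ) :
    Hedge a b c d f = -sq2pi / (1 - sq2pi * a * Complex.exp (a^2/2) * Ferf a) *
      (Complex.exp (a^2/2) * a * (Complex.exp (-f) * Ferf b * Ferf c - Ferf d * Ferf a
          + f * Ferf d * Ferf a)
        + Complex.exp (a^2/2) * (Complex.exp (-f) * ((-Complex.exp (-(b^2)/2)/sq2pi) * Ferf c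
              + Ferf b * (-Complex.exp (-(c^2)/2)/sq2pi))
           - ((-Complex.exp (-(d^2)/2)/sq2pi) * Ferf a + Ferf d * (-Complex.exp (-(a^2)/2)/sq2pi))
           + f * Ferf d * (-Complex.exp (-(a^2)/2)/sq2pi))) := by
  have hFs : ∀ w : ℂ, HasDerivAt (fun x : ℂ => Ferf (w + x))
      (-Complex.exp (-(w^2)/2)/sq2pi) 0 := by
    intro w
    have h := (hasDerivAt_Ferf (w + 0)).comp (0:ℂ) ((hasDerivAt_id (0:ℂ)).const_add w)
    simpa [Function.comp_def] using h
  have hexp : HasDerivAt (fun x : ℂ => Complex.exp ((a+x)^2/2))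
      (Complex.exp (a^2/2) * a) 0 := by
    have h1 : HasDerivAt (fun x : ℂ => (a+x)^2/2) a 0 := by
      have h := (((hasDerivAt_id (0:ℂ)).const_add a).pow 2).div_const 2
      refine h.congr_deriv ?_
      simp
    have h2 := h1.cexp
    simpa using h2
  have t1 := ((hFs b).const_mul (Complex.exp (-f))).mul (hFs c)
  have t2 := (hFs d).mul (hFs a)
  have t3 := (hFs a).const_mul (f * Ferf d)
  have hprod := (t1.sub t2).add t3
  have hG := hexp.mul hprod
  have hG' : HasDerivAt (fun x : ℂ => Complex.exp ((a + x) ^ 2 / 2) *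
      (Complex.exp (-f) * Ferf (b + x) * Ferf (c + x) - Ferf (d + x) * Ferf (a + x) +
        f * Ferf d * Ferf (a + x))) _ 0 := hG
  unfold Hedge
  rw [hG'.deriv]
  show -sq2pi / (1 - sq2pi * a * Complex.exp (a ^ 2 / 2) * Ferf a) * _ = _
  congr 1
  simp only [add_zero, Pi.mul_apply, Pi.add_apply, Pi.sub_apply]
  ring

lemma tendsto_Q (A : ℂ) :
    Tendsto (fun s : ℝ => Ferf ((s:ℂ)+A)
      - Complex.exp (-(((s:ℂ)+A)^2)/2) * (sq2pi * ((s:ℂ)+A))⁻¹) atBot (𝓝 1) := by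
  have h2 : Tendsto (fun s : ℝ => (sq2pi * ((s:ℂ)+A))⁻¹) atBot (𝓝 0) := by
    have := (tendsto_const_nhds (x := sq2pi⁻¹) (f := atBot)).mul (tendsto_inv_shift A)
    simp only [mul_zero] at this
    refine this.congr fun s => ?_
    rw [mul_inv]
  have := (tendsto_Ferf A).sub ((tendsto_gauss A).mul h2)
  simpa using this

lemma aux_alg (σ a E Φ F S T Q : ℂ) (hσ : σ ≠ 0) (ha : a ≠ 0) (hE : E ≠ 0) (hΦE : Φ * E = 1)
    (hQdef : Q = F - Φ * (σ * a)⁻¹) (hQ : Q ≠ 0) :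
    -σ / (1 - σ * a * E * F) * (E * a * S + E * T) = (S + T * a⁻¹) / Q := by
  have hΦ : Φ = E⁻¹ := eq_inv_of_mul_eq_one_left hΦE
  subst hQdef
  rw [hΦ] at hQ ⊢
  have hden : 1 - σ*a*E*F = -(σ*a*E)*(F - E⁻¹*(σ*a)⁻¹) := by
    field_simp
    ring
  rw [hden]
  have hd1 : -(σ*a*E)*(F - E⁻¹*(σ*a)⁻¹) ≠ 0 :=
    mul_ne_zero (neg_ne_zero.2 (mul_ne_zero (mul_ne_zero hσ ha) hE)) hQ
  rw [div_mul_eq_mul_div, div_eq_div_iff hd1 hQ]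
  field_simp

lemma tendsto_Hedge (A B C D : ℂ) (f₀ : ℂ) :
    Tendsto (fun s : ℝ => Hedge ((s:ℂ)+A) ((s:ℂ)+B) ((s:ℂ)+C) ((s:ℂ)+D) f₀) atBot
      (𝓝 (Complex.exp (-f₀) - 1 + f₀)) := by
  have hQt := tendsto_Q A
  have hSt : Tendsto (fun s : ℝ => Complex.exp (-f₀) * Ferf ((s:ℂ)+B) * Ferf ((s:ℂ)+C)
      - Ferf ((s:ℂ)+D) * Ferf ((s:ℂ)+A) + f₀ * Ferf ((s:ℂ)+D) * Ferf ((s:ℂ)+A)) atBot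
      (𝓝 (Complex.exp (-f₀) - 1 + f₀)) := by
    have := (((tendsto_const_nhds (x := Complex.exp (-f₀)) (f := atBot)).mul
        (tendsto_Ferf B)).mul (tendsto_Ferf C)).sub
        ((tendsto_Ferf D).mul (tendsto_Ferf A)) |>.add
        (((tendsto_const_nhds (x := f₀) (f := atBot)).mul (tendsto_Ferf D)).mul (tendsto_Ferf A))
    simpa using this
  have hTt : Tendsto (fun s : ℝ => Complex.exp (-f₀) *
        ((-Complex.exp (-(((s:ℂ)+B)^2)/2)/sq2pi) * Ferf ((s:ℂ)+C)
          + Ferf ((s:ℂ)+B) * (-Complex.exp (-(((s:ℂ)+C)^2)/2)/sq2pi))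
      - ((-Complex.exp (-(((s:ℂ)+D)^2)/2)/sq2pi) * Ferf ((s:ℂ)+A)
          + Ferf ((s:ℂ)+D) * (-Complex.exp (-(((s:ℂ)+A)^2)/2)/sq2pi))
      + f₀ * Ferf ((s:ℂ)+D) * (-Complex.exp (-(((s:ℂ)+A)^2)/2)/sq2pi)) atBot (𝓝 0) := by
    have hg : ∀ Z : ℂ, Tendsto (fun s : ℝ => -Complex.exp (-(((s:ℂ)+Z)^2)/2)/sq2pi) atBot
        (𝓝 0) := by
      intro Z
      have := ((tendsto_gauss Z).neg.div_const sq2pi)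
      simpa using this
    have := ((tendsto_const_nhds (x := Complex.exp (-f₀)) (f := atBot)).mul
        (((hg B).mul (tendsto_Ferf C)).add ((tendsto_Ferf B).mul (hg C)))).sub
        (((hg D).mul (tendsto_Ferf A)).add ((tendsto_Ferf D).mul (hg A))) |>.add
        (((tendsto_const_nhds (x := f₀) (f := atBot)).mul (tendsto_Ferf D)).mul (hg A))
    simpa using this
  have hNt := (hSt.add (hTt.mul (tendsto_inv_shift A))).div hQt one_ne_zero
  simp only [mul_zero, add_zero, div_one] at hNt
  refine hNt.congr' ?_
  filter_upwards [hQt.eventually_ne one_ne_zero, eventually_lt_atBot (-A.re)] with s hQne hs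
  have ha : ((s:ℂ)+A) ≠ 0 := by
    intro h0
    have h1 : ((s:ℂ)+A).re = 0 := by rw [h0]; rfl
    simp only [Complex.add_re, Complex.ofReal_re] at h1
    linarith
  have hΦE : Complex.exp (-(((s:ℂ)+A)^2)/2) * Complex.exp (((s:ℂ)+A)^2/2) = 1 := by
    rw [← Complex.exp_add, show -((((s:ℝ):ℂ)+A)^2)/2 + (((s:ℝ):ℂ)+A)^2/2 = 0 by ring,
      Complex.exp_zero]
  rw [hedge_closed]
  exact (aux_alg sq2pi ((s:ℂ)+A) (Complex.exp ((((s:ℝ):ℂ)+A)^2/2))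
    (Complex.exp (-((((s:ℝ):ℂ)+A)^2)/2)) (Ferf ((s:ℂ)+A)) _ _ _
    sq2pi_ne ha (Complex.exp_ne_zero _) hΦE rfl hQne).symm

lemma det_gauge {n : ℕ} (c : Fin n → ℂ) (hc : ∀ i, c i ≠ 0) (A : Fin n → Fin n → ℂ) :
    Matrix.det (Matrix.of fun i j => (c i)⁻¹ * (c j * A i j)) = Matrix.det (Matrix.of A) := by
  have h1 : (Matrix.of fun i j => (c i)⁻¹ * (c j * A i j))
      = Matrix.of fun i j => (c i)⁻¹ * (Matrix.of fun i' j' => c j' * (Matrix.of A) i' j') i j :=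
    rfl
  rw [h1, Matrix.det_mul_column (fun i => (c i)⁻¹), Matrix.det_mul_row c]
  rw [← mul_assoc, ← Finset.prod_mul_distrib]
  simp only [inv_mul_cancel₀ (hc _)]
  simp

end AuxProofS7

/-- the edge overlap function degenerates to the bulk one deep inside the bulk. -/
theorem statement7 (k : ℕ) (hk : 1 ≤ k) (lam : Fin k → ℂ)
    (h1 : ∀ i : Fin k, 1 ≤ i.val → lam i ≠ lam ⟨0, by omega⟩) :
    (∀ᶠ R : ℝ in atBot, D11edgeF 1 (fun _ : Fin 1 => (R : ℂ) + lam ⟨0, by omega⟩) ≠ 0) ∧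
    Tendsto (fun R : ℝ =>
        D11edgeF k (fun i => (R : ℂ) + lam i) /
          D11edgeF 1 (fun _ : Fin 1 => (R : ℂ) + lam ⟨0, by omega⟩))
      atBot
      (𝓝 (D11bulkF k lam / D11bulkF 1 (fun _ : Fin 1 => lam ⟨0, by omega⟩))) ∧
    D11bulkF k lam / D11bulkF 1 (fun _ : Fin 1 => lam ⟨0, by omega⟩) =
      (Real.pi : ℂ) * D11bulkF k lam := by
  have hk0 : 0 < k := hk
  have hπ : (Real.pi : ℂ) ≠ 0 := Complex.ofReal_ne_zero.mpr Real.pi_ne_zero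
  set l0 : ℂ := lam ⟨0, hk0⟩ with hl0
  set L : Fin (k-1) → ℂ := fun i => lam (sh1 i) with hLdef
  have hbulk1 : ∀ z : ℂ, D11bulkF 1 (fun _ : Fin 1 => z) = 1/(Real.pi:ℂ) := by
    intro z
    haveI : IsEmpty (Fin (1-1)) := inferInstanceAs (IsEmpty (Fin 0))
    unfold D11bulkF
    rw [Matrix.det_isEmpty, mul_one]
  have hev0k : ∀ R : ℝ, ev0 (fun i => (R:ℂ) + lam i) = (R:ℂ) + l0 := by
    intro R
    unfold ev0
    rw [dif_pos hk0]
  have hev0lam : ev0 lam = l0 := by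
    unfold ev0
    rw [dif_pos hk0]
  have hev01 : ∀ R : ℝ, ev0 (fun _ : Fin 1 => (R:ℂ) + l0) = (R:ℂ) + l0 := by
    intro R
    unfold ev0
    rw [dif_pos one_pos]
  set M : ℝ → Fin (k-1) → Fin (k-1) → ℂ := fun R i j =>
    K11edge ((R:ℂ) + L i) (conj ((R:ℂ) + L i)) ((R:ℂ) + L j) (conj ((R:ℂ) + L j))
      ((R:ℂ) + l0) (conj ((R:ℂ) + l0)) with hM
  set Bm : Fin (k-1) → Fin (k-1) → ℂ := fun i j =>
    K11bulk (L i) (conj (L i)) (L j) (conj (L j)) l0 (conj l0) with hBm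
  set pref : ℝ → ℂ := fun R => (1 / (Real.sqrt (2 * Real.pi ^ 3) : ℂ)) *
    (Complex.exp (-(((R:ℂ) + l0 + conj ((R:ℂ) + l0)) ^ 2 / 2)) -
      (Real.sqrt (2 * Real.pi) : ℂ) * ((R:ℂ) + l0 + conj ((R:ℂ) + l0)) *
        Ferf ((R:ℂ) + l0 + conj ((R:ℂ) + l0))) with hpref
  have hedgek : ∀ R : ℝ, D11edgeF k (fun i => (R:ℂ) + lam i)
      = pref R * Matrix.det (Matrix.of (M R)) := by
    intro R
    unfold D11edgeF
    rw [hev0k R]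
  have hedge1 : ∀ R : ℝ, D11edgeF 1 (fun _ : Fin 1 => (R:ℂ) + l0) = pref R := by
    intro R
    haveI : IsEmpty (Fin (1-1)) := inferInstanceAs (IsEmpty (Fin 0))
    unfold D11edgeF
    rw [hev01 R, Matrix.det_isEmpty, mul_one]
  have h2R : Tendsto (fun R : ℝ => 2*R) atBot atBot :=
    (tendsto_const_mul_atBot_of_pos two_pos).2 tendsto_id
  have hQ2 : Tendsto (fun R : ℝ => Ferf ((↑(2*R):ℂ) + (l0 + conj l0))
      - Complex.exp (-(((↑(2*R):ℂ) + (l0 + conj l0))^2)/2)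
        * (sq2pi * ((↑(2*R):ℂ) + (l0 + conj l0)))⁻¹) atBot (𝓝 1) :=
    (tendsto_Q (l0 + conj l0)).comp h2R
  have hane : ∀ᶠ R : ℝ in atBot, ((↑(2*R):ℂ) + (l0 + conj l0)) ≠ 0 := by
    filter_upwards [eventually_lt_atBot (-(((l0 + conj l0)).re)/2)] with R hR
    intro h0
    have h1 := congrArg Complex.re h0
    simp only [Complex.add_re, Complex.ofReal_re, Complex.zero_re] at h1
    simp only [Complex.add_re] at hR
    linarith
  have hQne := hQ2.eventually_ne one_ne_zero
  have haRA : ∀ R : ℝ, (R:ℂ) + l0 + conj ((R:ℂ) + l0) = (↑(2*R):ℂ) + (l0 + conj l0) := by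
    intro R
    simp only [map_add, Complex.conj_ofReal]
    push_cast
    ring
  have hPne : ∀ᶠ R : ℝ in atBot, pref R ≠ 0 := by
    filter_upwards [hane, hQne] with R ha hq
    rw [hpref]
    dsimp only
    rw [haRA R]
    have hσa : sq2pi * ((↑(2*R):ℂ) + (l0 + conj l0)) ≠ 0 := mul_ne_zero sq2pi_ne ha
    have hs2 : (Real.sqrt (2 * Real.pi) : ℂ) = sq2pi := rfl
    have hkey : Complex.exp (-(((↑(2*R):ℂ) + (l0 + conj l0))^2 / 2))
        - (Real.sqrt (2*Real.pi):ℂ) * ((↑(2*R):ℂ) + (l0 + conj l0))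
          * Ferf ((↑(2*R):ℂ) + (l0 + conj l0))
        = -(sq2pi * ((↑(2*R):ℂ) + (l0 + conj l0))) * (Ferf ((↑(2*R):ℂ) + (l0 + conj l0))
          - Complex.exp (-(((↑(2*R):ℂ) + (l0 + conj l0))^2)/2)
            * (sq2pi * ((↑(2*R):ℂ) + (l0 + conj l0)))⁻¹) := by
      rw [hs2, show -((((↑(2*R):ℝ):ℂ) + (l0 + conj l0))^2 / 2)
        = -((((↑(2*R):ℝ):ℂ) + (l0 + conj l0))^2)/2 by ring]
      linear_combination (-(Complex.exp (-((((↑(2*R):ℝ):ℂ) + (l0 + conj l0))^2)/2)))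
        * mul_inv_cancel₀ hσa
    rw [hkey]
    exact mul_ne_zero (one_div_ne_zero (Complex.ofReal_ne_zero.mpr
        (ne_of_gt (Real.sqrt_pos.mpr (by positivity)))))
      (mul_ne_zero (neg_ne_zero.2 hσa) hq)
  have h3 : D11bulkF k lam / D11bulkF 1 (fun _ : Fin 1 => l0) =
      (Real.pi : ℂ) * D11bulkF k lam := by
    rw [hbulk1 l0, one_div, div_inv_eq_mul, mul_comm]
  refine ⟨?_, ?_, h3⟩
  · filter_upwards [hPne] with R hp
    show D11edgeF 1 (fun _ : Fin 1 => (R:ℂ) + l0) ≠ 0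
    rw [hedge1 R]
    exact hp
  · show Tendsto (fun R : ℝ => D11edgeF k (fun i => (R:ℂ) + lam i)
        / D11edgeF 1 (fun _ : Fin 1 => (R:ℂ) + l0)) atBot
      (𝓝 (D11bulkF k lam / D11bulkF 1 (fun _ : Fin 1 => l0)))
    rw [hbulk1 l0]
    have htarget : D11bulkF k lam / (1/(Real.pi:ℂ)) = Matrix.det (Matrix.of Bm) := by
      unfold D11bulkF
      rw [hev0lam, one_div, div_inv_eq_mul, mul_comm ((Real.pi:ℂ)⁻¹ * _) (Real.pi:ℂ),
        ← mul_assoc, mul_inv_cancel₀ hπ, one_mul]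
    rw [htarget]
    set cg : ℝ → Fin (k-1) → ℂ := fun R i => Complex.exp (((R:ℂ) + conj l0) * L i) with hcg
    set M2 : ℝ → Fin (k-1) → Fin (k-1) → ℂ := fun R i j => cg R i * M R i j * (cg R j)⁻¹
      with hM2
    have hdetg : ∀ R : ℝ, Matrix.det (Matrix.of (M R)) = Matrix.det (Matrix.of (M2 R)) := by
      intro R
      rw [← det_gauge (cg R) (fun i => Complex.exp_ne_zero _) (M2 R)]
      congr 1
      ext i j
      rw [hM2]
      dsimp only [Matrix.of_apply]
      have hcgne : ∀ (R : ℝ) (i : Fin (k-1)), cg R i ≠ 0 := fun R i => Complex.exp_ne_zero _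
      field_simp
      rw [eq_div_iff (mul_ne_zero (hcgne R i) (hcgne R j))]
      ring
    have hentry : ∀ i j, Tendsto (fun R : ℝ => M2 R i j) atBot (𝓝 (Bm i j)) := by
      intro i j
      have hid : ∀ R : ℝ, M2 R i j =
          (1/(Real.pi:ℂ)) * (1 + ((R:ℂ) + L i - ((R:ℂ) + l0)) * ((R:ℂ) + conj (L i) - ((R:ℂ) + conj l0)))
            * Complex.exp ((conj (L i) - conj l0) * (L j - L i))
            * Hedge ((↑(2*R):ℂ) + (l0 + conj l0)) ((↑(2*R):ℂ) + (l0 + conj (L i)))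
                ((↑(2*R):ℂ) + (L j + conj l0)) ((↑(2*R):ℂ) + (L j + conj (L i)))
                ((l0 - L j) * (conj l0 - conj (L i)))
            / ((l0 - L j)^2 * (conj l0 - conj (L i))^2) := by
        intro R
        rw [hM2, hM]
        dsimp only
        unfold K11edge omegaEdge kapEdge
        simp only [map_add, Complex.conj_ofReal]
        rw [show (R:ℂ) + l0 + ((R:ℂ) + conj l0) = (↑(2*R):ℂ) + (l0 + conj l0) by
              push_cast; ring,
            show (R:ℂ) + l0 + ((R:ℂ) + conj (L i)) = (↑(2*R):ℂ) + (l0 + conj (L i)) by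
              push_cast; ring,
            show (R:ℂ) + L j + ((R:ℂ) + conj l0) = (↑(2*R):ℂ) + (L j + conj l0) by
              push_cast; ring,
            show (R:ℂ) + L j + ((R:ℂ) + conj (L i)) = (↑(2*R):ℂ) + (L j + conj (L i)) by
              push_cast; ring,
            show (R:ℂ) + l0 - ((R:ℂ) + L j) = l0 - L j by ring,
            show (R:ℂ) + conj l0 - ((R:ℂ) + conj (L i)) = conj l0 - conj (L i) by ring]
        have hexpc : Complex.exp (((R:ℂ) + conj l0) * L i)
              * Complex.exp (-(((R:ℂ) + L i) * ((R:ℂ) + conj (L i))))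
              * Complex.exp (((R:ℂ) + conj (L i)) * ((R:ℂ) + L j))
              * (Complex.exp (((R:ℂ) + conj l0) * L j))⁻¹
            = Complex.exp ((conj (L i) - conj l0) * (L j - L i)) := by
          rw [← Complex.exp_neg, ← Complex.exp_add, ← Complex.exp_add, ← Complex.exp_add]
          congr 1
          ring
        generalize Hedge ((↑(2*R):ℂ) + (l0 + conj l0)) ((↑(2*R):ℂ) + (l0 + conj (L i)))
            ((↑(2*R):ℂ) + (L j + conj l0)) ((↑(2*R):ℂ) + (L j + conj (L i)))
            ((l0 - L j) * (conj l0 - conj (L i))) = HH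
        linear_combination ((1/(Real.pi:ℂ))
          * (1 + ((R:ℂ) + L i - ((R:ℂ) + l0)) * ((R:ℂ) + conj (L i) - ((R:ℂ) + conj l0))) * HH
          * (((l0 - L j)^2 * (conj l0 - conj (L i))^2)⁻¹)) * hexpc
      have hH2 : Tendsto (fun R : ℝ => Hedge ((↑(2*R):ℂ) + (l0 + conj l0))
          ((↑(2*R):ℂ) + (l0 + conj (L i))) ((↑(2*R):ℂ) + (L j + conj l0))
          ((↑(2*R):ℂ) + (L j + conj (L i))) ((l0 - L j) * (conj l0 - conj (L i)))) atBot
          (𝓝 (Complex.exp (-((l0 - L j) * (conj l0 - conj (L i)))) - 1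
            + (l0 - L j) * (conj l0 - conj (L i)))) :=
        (tendsto_Hedge (l0 + conj l0) (l0 + conj (L i)) (L j + conj l0) (L j + conj (L i))
          ((l0 - L j) * (conj l0 - conj (L i)))).comp h2R
      have hconst : Tendsto (fun R : ℝ => (1/(Real.pi:ℂ))
          * (1 + ((R:ℂ) + L i - ((R:ℂ) + l0)) * ((R:ℂ) + conj (L i) - ((R:ℂ) + conj l0))))
          atBot (𝓝 ((1/(Real.pi:ℂ)) * (1 + (L i - l0) * (conj (L i) - conj l0)))) := by
        refine tendsto_const_nhds.congr fun R => ?_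
        rw [show (R:ℂ) + L i - ((R:ℂ) + l0) = L i - l0 by ring,
          show (R:ℂ) + conj (L i) - ((R:ℂ) + conj l0) = conj (L i) - conj l0 by ring]
      have hfin := (((hconst.mul (tendsto_const_nhds
          (x := Complex.exp ((conj (L i) - conj l0) * (L j - L i))) (f := atBot))).mul hH2).div_const
        ((l0 - L j)^2 * (conj l0 - conj (L i))^2))
      have hval : (1/(Real.pi:ℂ)) * (1 + (L i - l0) * (conj (L i) - conj l0))
          * Complex.exp ((conj (L i) - conj l0) * (L j - L i))
          * (Complex.exp (-((l0 - L j) * (conj l0 - conj (L i)))) - 1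
            + (l0 - L j) * (conj l0 - conj (L i)))
          / ((l0 - L j)^2 * (conj l0 - conj (L i))^2) = Bm i j := by
        have hX := mul_inv_cancel₀
          (Complex.exp_ne_zero ((conj (L i) - conj l0) * (L j - l0)))
        have e1 : Complex.exp ((conj (L i) - conj l0) * (L j - L i))
            = Complex.exp ((conj (L i) - conj l0) * (L j - l0))
              * Complex.exp (-((L i - l0) * (conj (L i) - conj l0))) := by
          rw [← Complex.exp_add]
          congr 1
          ring
        have e2 : Complex.exp (-((l0 - L j) * (conj l0 - conj (L i))))
            = (Complex.exp ((conj (L i) - conj l0) * (L j - l0)))⁻¹ := by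
          rw [← Complex.exp_neg]
          congr 1
          ring
        rw [hBm]
        dsimp only
        unfold K11bulk omegaBulk kapBulk
        rw [e1, e2,
          show ((conj (L i) - conj l0) * (L j - l0))^2
            = (l0 - L j)^2 * (conj l0 - conj (L i))^2 by ring]
        linear_combination ((1/(Real.pi:ℂ)) * (1 + (L i - l0) * (conj (L i) - conj l0))
          * Complex.exp (-((L i - l0) * (conj (L i) - conj l0)))
          * (((l0 - L j)^2 * (conj l0 - conj (L i))^2)⁻¹)) * hX
      rw [hval] at hfin
      exact hfin.congr fun R => (hid R).symm
    have hmat : Tendsto (fun R : ℝ => Matrix.of (M2 R)) atBot (𝓝 (Matrix.of Bm)) := by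
      refine tendsto_pi_nhds.2 ?_
      intro i
      rw [tendsto_pi_nhds]
      intro j
      exact hentry i j
    have hdet2 : Tendsto (fun R : ℝ => Matrix.det (Matrix.of (M2 R))) atBot
        (𝓝 (Matrix.det (Matrix.of Bm))) :=
      ((Continuous.matrix_det continuous_id).tendsto (Matrix.of Bm)).comp hmat
    have hdet3 : Tendsto (fun R : ℝ => Matrix.det (Matrix.of (M R))) atBot
        (𝓝 (Matrix.det (Matrix.of Bm))) := hdet2.congr fun R => (hdetg R).symm
    refine Tendsto.congr' ?_ hdet3
    filter_upwards [hPne] with R hp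
    rw [hedgek R, hedge1 R]
    exact (mul_div_cancel_left₀ _ hp).symm
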